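/- Let W = (w_{i,j}) be an n×n nonnegative matrix with leading eigenvalue ρ and positive left eigenvector v = (v_1, …, v_n). Construct W̃ by splitting vertex 1 into m copies as follows: if the nonzero entries of row 1 are in columns b_1, …, b_m, then W̃ has m rows replacing row 1, the j-th new row having its single nonzero entry w_{1,b_j} in column b_j (with columns indexed after splitting), and every column-1 entry w_{c,1} replaced by m identical entries w_{c,1} in the m new columns. Then ρ is the leading eigenvalue of W̃ and (v_1, …, v_1, v_2, …, v_n) (with v_1 repeated m times) is a corresponding positive left eigenvector. -/

import Mathlib

open Matrix

/-- Vertex-splitting lemma. `W` is a nonnegative `(n+1)×(n+1)` matrix with leading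
eigenvalue `ρ` (every real eigenvalue `μ` satisfies `|μ| ≤ ρ`) and positive left
eigenvector `v`. The nonzero entries of row `0` sit exactly in the columns
`b 0, …, b m` (the outgoing arrows of vertex `0`). Splitting vertex `0` into
`m+1` copies, the `l`-th new row having its single nonzero entry `W 0 (b l)` in
(the copies of) column `b l`, and each column-`0` entry `W c 0` duplicated into
all the new columns, produces `W̃`. Then `ρ` is again the leading eigenvalue of
`W̃`, with positive left eigenvector `(v 0, …, v 0, v 1, …, v n)`. -/
theorem stmt6 (n m : ℕ) (W : Matrix (Fin (n + 1)) (Fin (n + 1)) ℝ)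
    (ρ : ℝ) (v : Fin (n + 1) → ℝ) (b : Fin (m + 1) → Fin (n + 1))
    (hW : ∀ i j, 0 ≤ W i j)
    (hb : Function.Injective b)
    (hrow : ∀ j, W 0 j ≠ 0 ↔ ∃ l, b l = j)
    (hv : ∀ i, 0 < v i)
    (heig : v ᵥ* W = ρ • v)
    (heigval : Module.End.HasEigenvalue (Matrix.mulVecLin W) ρ)
    (hlead : ∀ μ : ℝ, Module.End.HasEigenvalue (Matrix.mulVecLin W) μ → |μ| ≤ ρ) :
    ∀ Wt : Matrix (Fin (m + 1) ⊕ {j : Fin (n + 1) // j ≠ 0})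
             (Fin (m + 1) ⊕ {j : Fin (n + 1) // j ≠ 0}) ℝ,
    ∀ vt : (Fin (m + 1) ⊕ {j : Fin (n + 1) // j ≠ 0}) → ℝ,
    (∀ l l', Wt (Sum.inl l) (Sum.inl l') = if b l = 0 then W 0 0 else 0) →
    (∀ l j, Wt (Sum.inl l) (Sum.inr j) = if b l = j.1 then W 0 j.1 else 0) →
    (∀ j l', Wt (Sum.inr j) (Sum.inl l') = W j.1 0) →
    (∀ j j', Wt (Sum.inr j) (Sum.inr j') = W j.1 j'.1) →
    (∀ l, vt (Sum.inl l) = v 0) → (∀ j, vt (Sum.inr j) = v j.1) →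
    (∀ p, 0 < vt p) ∧
    vt ᵥ* Wt = ρ • vt ∧
    Module.End.HasEigenvalue (Matrix.mulVecLin Wt) ρ ∧
    (∀ μ : ℝ, Module.End.HasEigenvalue (Matrix.mulVecLin Wt) μ → |μ| ≤ ρ) := by
  intro Wt vt h1 h2 h3 h4 hv1 hv2
  classical
  -- abbreviation for the index type after splitting
  -- projection sending each split vertex back to the original one
  set π : (Fin (m + 1) ⊕ {j : Fin (n + 1) // j ≠ 0}) → Fin (n + 1) := Sum.elim (fun _ => 0) Subtype.val with hπ
  -- key summation lemma for the split row
  have hkey : ∀ c : Fin (n + 1),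
      (∑ l : Fin (m + 1), if b l = c then W 0 c else 0) = W 0 c := by
    intro c
    by_cases h : ∃ l, b l = c
    · obtain ⟨l0, hl0⟩ := h
      rw [Finset.sum_eq_single l0]
      · simp [hl0]
      · intro l' _ hne
        have : b l' ≠ c := fun hc => hne (hb (hc.trans hl0.symm))
        simp [this]
      · simp
    · have hc : W 0 c = 0 := by
        by_contra hne
        exact h ((hrow c).1 hne)
      rw [hc]
      refine Finset.sum_eq_zero fun l _ => ?_
      have : b l ≠ c := fun hc' => h ⟨l, hc'⟩
      simp [this]
  -- splitting a sum over `Fin (n+1)` into the `0` term and the rest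
  have hsplit : ∀ f : Fin (n + 1) → ℝ,
      (∑ i, f i) = f 0 + ∑ j : {j : Fin (n + 1) // j ≠ 0}, f j.1 := by
    intro f
    rw [Fintype.sum_eq_add_sum_compl (0 : Fin (n + 1)) f]
    congr 1
    rw [← Finset.sum_subtype ({0}ᶜ : Finset (Fin (n + 1)))
      (fun x => by simp) (fun x => f x)]
  -- the factorization matrices
  set S : Matrix (Fin (m + 1) ⊕ {j : Fin (n + 1) // j ≠ 0}) (Fin (n + 1)) ℝ := fun p i =>
    Sum.elim (fun l => if b l = i then W 0 (b l) else 0) (fun j => W j.1 i) p with hS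
  set T : Matrix (Fin (n + 1)) (Fin (m + 1) ⊕ {j : Fin (n + 1) // j ≠ 0}) ℝ := fun i q => if π q = i then 1 else 0 with hT
  -- Wt = S * T
  have hfac1 : Wt = S * T := by
    ext p q
    have : (S * T) p q = S p (π q) := by
      rw [Matrix.mul_apply]
      simp only [hT]
      rw [Finset.sum_eq_single (π q)]
      · simp
      · intro i _ hne; simp [Ne.symm hne]
      · simp
    rw [this]
    cases p with
    | inl l =>
      cases q with
      | inl l' => simp only [h1, hS, hπ, Sum.elim_inl]
                  by_cases hbl : b l = 0 <;> simp [hbl]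
      | inr j => simp only [h2, hS, hπ, Sum.elim_inl, Sum.elim_inr]
                 by_cases hbl : b l = j.1 <;> simp [hbl]
    | inr j =>
      cases q with
      | inl l' => simp [h3, hS, hπ]
      | inr j' => simp [h4, hS, hπ]
  -- T * S = W
  have hfac2 : T * S = W := by
    ext i j
    rw [Matrix.mul_apply, Fintype.sum_sum_type]
    simp only [hT, hS, hπ, Sum.elim_inl, Sum.elim_inr]
    show (∑ l : Fin (m + 1), (if (0:Fin (n+1)) = i then (1:ℝ) else 0) *
        (if b l = j then W 0 (b l) else 0)) +
      (∑ j' : {j : Fin (n + 1) // j ≠ 0}, (if j'.1 = i then (1:ℝ) else 0) * W j'.1 j) = W i j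
    by_cases hi : i = 0
    · subst hi
      have h2' : (∑ j' : {j : Fin (n + 1) // j ≠ 0},
          (if j'.1 = 0 then (1:ℝ) else 0) * W j'.1 j) = 0 := by
        refine Finset.sum_eq_zero fun j' _ => by simp [j'.2]
      rw [h2']
      simp only [if_pos rfl, one_mul, add_zero]
      have := hkey j
      calc (∑ l : Fin (m + 1), (if (0:Fin (n+1)) = 0 then (1:ℝ) else 0) *
              (if b l = j then W 0 (b l) else 0))
          = ∑ l : Fin (m + 1), (if b l = j then W 0 j else 0) := by
            refine Finset.sum_congr rfl fun l _ => ?_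
            by_cases hbl : b l = j <;> simp [hbl]
        _ = W 0 j := hkey j
    · have h1' : (∑ l : Fin (m + 1), (if (0:Fin (n+1)) = i then (1:ℝ) else 0) *
          (if b l = j then W 0 (b l) else 0)) = 0 := by
        refine Finset.sum_eq_zero fun l _ => by simp [Ne.symm hi]
      rw [h1', zero_add]
      rw [Finset.sum_eq_single (⟨i, hi⟩ : {j : Fin (n + 1) // j ≠ 0})]
      · simp
      · intro j' _ hne
        have : j'.1 ≠ i := fun hc => hne (Subtype.ext hc)
        simp [this]
      · simp
  -- ρ is nonnegative
  have heig' : ∀ j, (∑ i, v i * W i j) = ρ * v j := by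
    intro j
    have := congrFun heig j
    simpa [Matrix.vecMul, dotProduct] using this
  have hρ0 : 0 ≤ ρ := by
    have h0 := heig' 0
    have hpos : (0:ℝ) ≤ ∑ i, v i * W i 0 :=
      Finset.sum_nonneg fun i _ => mul_nonneg (hv i).le (hW i 0)
    nlinarith [hv (0 : Fin (n+1))]
  refine ⟨fun p => by cases p with
    | inl l => rw [hv1]; exact hv 0
    | inr j => rw [hv2]; exact hv j.1, ?_, ?_, ?_⟩
  -- left eigenvector equation
  · funext q
    have hvM : (vt ᵥ* Wt) q = ∑ p, vt p * Wt p q := by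
      simp [Matrix.vecMul, dotProduct]
    rw [hvM, Fintype.sum_sum_type]
    cases q with
    | inl l' =>
      have hA : (∑ l : Fin (m + 1), vt (Sum.inl l) * Wt (Sum.inl l) (Sum.inl l'))
          = v 0 * W 0 0 := by
        calc (∑ l : Fin (m + 1), vt (Sum.inl l) * Wt (Sum.inl l) (Sum.inl l'))
            = ∑ l : Fin (m + 1), v 0 * (if b l = 0 then W 0 0 else 0) := by
              refine Finset.sum_congr rfl fun l _ => by rw [hv1, h1]
          _ = v 0 * ∑ l : Fin (m + 1), (if b l = 0 then W 0 0 else 0) := by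
              rw [Finset.mul_sum]
          _ = v 0 * W 0 0 := by rw [hkey 0]
      have hBsum : (∑ j : {j : Fin (n + 1) // j ≠ 0},
          vt (Sum.inr j) * Wt (Sum.inr j) (Sum.inl l')) =
          ∑ j : {j : Fin (n + 1) // j ≠ 0}, v j.1 * W j.1 0 := by
        refine Finset.sum_congr rfl fun j _ => by rw [hv2, h3]
      rw [hA, hBsum]
      have := heig' 0
      rw [hsplit (fun i => v i * W i 0)] at this
      simp only [Pi.smul_apply, smul_eq_mul]
      rw [this, hv1]
    | inr j' =>
      have hA : (∑ l : Fin (m + 1), vt (Sum.inl l) * Wt (Sum.inl l) (Sum.inr j'))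
          = v 0 * W 0 j'.1 := by
        calc (∑ l : Fin (m + 1), vt (Sum.inl l) * Wt (Sum.inl l) (Sum.inr j'))
            = ∑ l : Fin (m + 1), v 0 * (if b l = j'.1 then W 0 j'.1 else 0) := by
              refine Finset.sum_congr rfl fun l _ => by rw [hv1, h2]
          _ = v 0 * ∑ l : Fin (m + 1), (if b l = j'.1 then W 0 j'.1 else 0) := by
              rw [Finset.mul_sum]
          _ = v 0 * W 0 j'.1 := by rw [hkey j'.1]
      have hBsum : (∑ j : {j : Fin (n + 1) // j ≠ 0},
          vt (Sum.inr j) * Wt (Sum.inr j) (Sum.inr j')) =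
          ∑ j : {j : Fin (n + 1) // j ≠ 0}, v j.1 * W j.1 j'.1 := by
        refine Finset.sum_congr rfl fun j _ => by rw [hv2, h4]
      rw [hA, hBsum]
      have := heig' j'.1
      rw [hsplit (fun i => v i * W i j'.1)] at this
      simp only [Pi.smul_apply, smul_eq_mul]
      rw [this, hv2]
  -- ρ is an eigenvalue of Wt
  · by_cases hρ : ρ = 0
    · -- then W = 0, hence Wt = 0
      subst hρ
      have hW0 : W = 0 := by
        ext i j
        have h0 := heig' j
        simp only [zero_mul] at h0
        have hterm : ∀ k ∈ Finset.univ, (0:ℝ) ≤ v k * W k j :=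
          fun k _ => mul_nonneg (hv k).le (hW k j)
        have := (Finset.sum_eq_zero_iff_of_nonneg hterm).1 h0 i (Finset.mem_univ i)
        have hvne : v i ≠ 0 := (hv i).ne'
        have : W i j = 0 := by
          rcases mul_eq_zero.1 this with h | h
          · exact absurd h hvne
          · exact h
        simpa using this
      have hWt0 : Wt = 0 := by
        ext p q
        cases p with
        | inl l =>
          cases q with
          | inl l' => simp [h1, hW0]
          | inr j => simp [h2, hW0]
        | inr j =>
          cases q with
          | inl l' => simp [h3, hW0]
          | inr j' => simp [h4, hW0]
      refine Module.End.hasEigenvalue_of_hasEigenvector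
        (x := fun _ => (1:ℝ)) ⟨?_, ?_⟩
      · simp [Matrix.mulVecLin_apply, hWt0, Module.End.mem_eigenspace_iff]
      · intro hc
        have := congrFun hc (Sum.inl 0)
        simp at this
    · obtain ⟨x, hx1, hx2⟩ := heigval.exists_hasEigenvector
      have hWx : W *ᵥ x = ρ • x := by
        have := hx1
        rw [Module.End.mem_eigenspace_iff] at this
        simpa [Matrix.mulVecLin_apply] using this
      have e2 : S *ᵥ (T *ᵥ (S *ᵥ x)) = Wt *ᵥ (S *ᵥ x) := by
        rw [Matrix.mulVec_mulVec, ← hfac1]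
      have e3 : T *ᵥ (S *ᵥ x) = W *ᵥ x := by
        rw [Matrix.mulVec_mulVec, hfac2]
      refine Module.End.hasEigenvalue_of_hasEigenvector
        (x := S *ᵥ x) ⟨?_, ?_⟩
      · rw [Module.End.mem_eigenspace_iff, Matrix.mulVecLin_apply, ← e2, e3, hWx,
          Matrix.mulVec_smul]
      · intro hc
        have hzero : ρ • x = 0 := by
          rw [← hWx, ← e3, hc, Matrix.mulVec_zero]
        exact hx2 ((smul_eq_zero.1 hzero).resolve_left hρ)
  -- every eigenvalue of Wt has modulus at most ρ
  · intro μ hμ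
    by_cases hμ0 : μ = 0
    · simpa [hμ0] using hρ0
    · obtain ⟨x, hx1, hx2⟩ := hμ.exists_hasEigenvector
      have hWtx : Wt *ᵥ x = μ • x := by
        have := hx1
        rw [Module.End.mem_eigenspace_iff] at this
        simpa [Matrix.mulVecLin_apply] using this
      have e2 : S *ᵥ (T *ᵥ x) = Wt *ᵥ x := by
        rw [Matrix.mulVec_mulVec, ← hfac1]
      have e1 : T *ᵥ (S *ᵥ (T *ᵥ x)) = W *ᵥ (T *ᵥ x) := by
        rw [Matrix.mulVec_mulVec, hfac2]
      have hWy : W *ᵥ (T *ᵥ x) = μ • (T *ᵥ x) := by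
        rw [← e1, e2, hWtx, Matrix.mulVec_smul]
      have hyne : T *ᵥ x ≠ 0 := by
        intro hc
        have hzero : μ • x = 0 := by
          rw [← hWtx, ← e2, hc, Matrix.mulVec_zero]
        exact hx2 ((smul_eq_zero.1 hzero).resolve_left hμ0)
      exact hlead μ (Module.End.hasEigenvalue_of_hasEigenvector
        ⟨Module.End.mem_eigenspace_iff.2 (by
          rw [Matrix.mulVecLin_apply]; exact hWy), hyne⟩)
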